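/- If a chain of domino tiles is blocked with both ends equal to k, then every value j in {0,…,6} with j ≠ k occurs a positive even number of times among the 2n entries a₁,b₁,…,aₙ,bₙ of the chain, and all seven domino tiles containing k belong to the chain. -/

import Mathlib

/-- A domino tile is an unordered pair of values in `{0,…,6}`. -/
abbrev Tile := Sym2 (Fin 7)

/-- The pip sum of the tile `[a,b]` is `a + b`. -/
def pips (t : Tile) : ℕ :=
  Sym2.lift ⟨fun (a b : Fin 7) => (a : ℕ) + (b : ℕ), fun a b => Nat.add_comm a b⟩ t

/-- A chain of domino tiles: a nonempty finite sequence of oriented tiles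
`(a₁,b₁),…,(aₙ,bₙ)` whose underlying unordered tiles are pairwise distinct and
which satisfies `bᵢ = aᵢ₊₁` for all `1 ≤ i < n`. -/
structure DChain where
  tiles : List (Fin 7 × Fin 7)
  ne : tiles ≠ []
  nodup : (tiles.map fun p => Sym2.mk p.1 p.2).Nodup
  linked : tiles.Chain' fun p q => p.2 = q.1

/-- The left end `a₁` of a chain. -/
def DChain.left (C : DChain) : Fin 7 := (C.tiles.head C.ne).1

/-- The right end `bₙ` of a chain. -/
def DChain.right (C : DChain) : Fin 7 := (C.tiles.getLast C.ne).2

/-- The `2n` entries `a₁,b₁,a₂,b₂,…,aₙ,bₙ` of a chain. -/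
def DChain.entries (C : DChain) : List (Fin 7) := C.tiles.flatMap fun p => [p.1, p.2]

/-- The underlying (unordered) tiles of a chain. -/
def DChain.tileList (C : DChain) : List Tile := C.tiles.map fun p => Sym2.mk p.1 p.2

/-- The total pip sum of a chain. -/
def DChain.pipsSum (C : DChain) : ℕ := (C.tiles.map fun p => (p.1 : ℕ) + (p.2 : ℕ)).sum

/-- A chain is blocked if no domino tile outside the chain contains its left end,
and no domino tile outside the chain contains its right end. -/
def DChain.Blocked (C : DChain) : Prop :=
  ∀ t : Tile, t ∉ C.tileList → C.left ∉ t ∧ C.right ∉ t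

lemma even_aux (j : Fin 7) :
    ∀ (L : List (Fin 7 × Fin 7)) (h : L ≠ []) (_hc : L.Chain' fun p q => p.2 = q.1),
    ((L.flatMap fun p => [p.1, p.2]).count j
      + ([(L.head h).1, (L.getLast h).2]).count j) % 2 = 0
  | [p], _, _ => by
      simp [List.count_cons]
      split <;> split <;> omega
  | p :: q :: rest, _, hc => by
      have hpq : p.2 = q.1 := (List.isChain_cons_cons.mp hc).1
      have IH := even_aux j (q :: rest) (by simp) (List.isChain_cons_cons.mp hc).2
      have hg : (p :: q :: rest).getLast (by simp) = (q :: rest).getLast (by simp) :=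
        List.getLast_cons (by simp)
      simp only [List.flatMap_cons, List.count_append, List.count_cons,
        List.count_nil, List.head_cons, hg] at IH ⊢
      rw [hpq]
      omega

/-- If a chain is blocked with both ends equal to `k`, then every value `j ≠ k` occurs a
positive even number of times among the entries of the chain, and all seven domino
tiles containing `k` belong to the chain. -/
theorem blocked_entries_and_tiles (C : DChain) (k : Fin 7) (h : C.Blocked)
    (hl : C.left = k) (hr : C.right = k) :
    (∀ j : Fin 7, j ≠ k → 0 < C.entries.count j ∧ Even (C.entries.count j)) ∧
    (∀ t : Tile, k ∈ t → t ∈ C.tileList) := by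
  have htiles : ∀ t : Tile, k ∈ t → t ∈ C.tileList := by
    intro t hk
    by_contra ht
    exact (h t ht).1 (hl ▸ hk)
  refine ⟨fun j hj => ?_, htiles⟩
  constructor
  · -- positivity
    have := htiles (Sym2.mk j k) (by simp)
    rw [DChain.tileList, List.mem_map] at this
    obtain ⟨p, hp, hpe⟩ := this
    rw [Sym2.mk_eq_mk_iff (q := (j, k))] at hpe
    have hj' : j ∈ C.entries := by
      rw [DChain.entries, List.mem_flatMap]
      refine ⟨p, hp, ?_⟩
      rcases hpe with h' | h' <;> subst h' <;> simp [Prod.swap]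
    exact List.count_pos_iff.mpr hj'
  · -- evenness
    have := even_aux j C.tiles C.ne C.linked
    have hcz : ([(C.tiles.head C.ne).1, (C.tiles.getLast C.ne).2]).count j = 0 := by
      have h1 : (C.tiles.head C.ne).1 = k := hl
      have h2 : (C.tiles.getLast C.ne).2 = k := hr
      simp [h1, h2, List.count_cons, hj, hj.symm]
    rw [hcz] at this
    rw [Nat.even_iff]
    simpa [DChain.entries] using this
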